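/- Fix σ > 0. The balanced population MLE loss is strictly decreasing in the separation Δ = μ₁ − μ₀ on (0, 1): for all μ₀ < μ₁ and μ₀′ < μ₁′ with 0 < μ₁ − μ₀ < μ₁′ − μ₀′ < 1, one has MLE(μ₀, μ₁) > MLE(μ₀′, μ₁′). -/

import Mathlib

open Real MeasureTheory ProbabilityTheory
open scoped NNReal ENNReal

/-- The balanced population MLE loss with `γ = (μ₁ − μ₀)/σ²` and `t = (μ₀ + μ₁)/2`. -/
noncomputable def MLE (σ μ₀ μ₁ : ℝ) : ℝ :=
  (1 / 2) * ∫ s, Real.log (1 + Real.exp (-(((μ₁ - μ₀) / σ ^ 2) * (s - (μ₀ + μ₁) / 2))))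
      ∂(gaussianReal μ₁ ⟨σ ^ 2, sq_nonneg σ⟩)
  + (1 / 2) * ∫ s, Real.log (1 + Real.exp (((μ₁ - μ₀) / σ ^ 2) * (s - (μ₀ + μ₁) / 2)))
      ∂(gaussianReal μ₀ ⟨σ ^ 2, sq_nonneg σ⟩)

lemma gpdf_rel (τ z : ℝ) :
    gaussianPDFReal (-τ) 1 z = rexp (-τ*z - τ^2/2) * gaussianPDFReal 0 1 z := by
  simp only [gaussianPDFReal]
  rw [show (-(z - (-τ))^2 / (2*((1:ℝ≥0):ℝ))) = (-τ*z - τ^2/2) + (-(z-0)^2/(2*((1:ℝ≥0):ℝ))) by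
    push_cast; ring]
  rw [exp_add]; ring

lemma integral_gauss1 (m : ℝ) (g : ℝ → ℝ) :
    ∫ z, g z ∂(gaussianReal m 1) = ∫ z, gaussianPDFReal m 1 z * g z := by
  rw [gaussianReal_of_var_ne_zero _ one_ne_zero]
  have h1 : (volume.withDensity (gaussianPDF m 1))
      = volume.withDensity (fun x => ((gaussianPDFReal m 1 x).toNNReal : ℝ≥0∞)) := rfl
  rw [h1, integral_withDensity_eq_integral_smul ((measurable_gaussianPDFReal m 1).real_toNNReal) g]
  refine integral_congr_ae (ae_of_all _ fun z => ?_)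
  simp [NNReal.smul_def, Real.coe_toNNReal _ (gaussianPDFReal_nonneg m 1 z)]

lemma map_reflect (m τ : ℝ) :
    (gaussianReal m 1).map (fun z => -z - τ) = gaussianReal (-m - τ) 1 := by
  have : (fun z : ℝ => -z - τ) = (fun x : ℝ => x + (-τ)) ∘ (fun z : ℝ => (-1) * z) := by
    funext z; simp; ring
  rw [this, ← Measure.map_map (by fun_prop) (by fun_prop),
    gaussianReal_map_const_mul, gaussianReal_map_add_const]
  norm_num [sub_eq_add_neg]

lemma chg (τ : ℝ) {g : ℝ → ℝ} (hg : Measurable g) :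
    ∫ z, g z ∂(gaussianReal 0 1)
      = ∫ z, rexp (-τ*z - τ^2/2) * g (-z - τ) ∂(gaussianReal 0 1) := by
  have hmap : (gaussianReal (-τ) 1).map (fun z => -z - τ) = gaussianReal 0 1 := by
    rw [map_reflect]; norm_num
  have h1 : ∫ z, g z ∂(gaussianReal 0 1) = ∫ z, g (-z - τ) ∂(gaussianReal (-τ) 1) := by
    rw [← hmap, integral_map (by fun_prop) hg.aestronglyMeasurable]
  rw [h1, integral_gauss1, integral_gauss1]
  refine integral_congr_ae (ae_of_all _ fun z => ?_)
  dsimp only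
  rw [gpdf_rel]; ring

lemma integrable_abs_gauss : Integrable (fun z => |z|) (gaussianReal 0 1) := by
  rw [gaussianReal_of_var_ne_zero _ one_ne_zero,
    integrable_withDensity_iff (measurable_gaussianPDF 0 1)
      (ae_of_all _ fun x => ENNReal.ofReal_lt_top)]
  have h := (integrable_rpow_mul_exp_neg_mul_sq (by norm_num : (0:ℝ) < 1/2)
      (by norm_num : (-1:ℝ) < 1)).const_mul ((√(2*π))⁻¹)
  refine h.abs.congr (ae_of_all _ fun x => ?_)
  have hnn : (0:ℝ) ≤ (√(2*π))⁻¹ * rexp (-(1/2)*x^2) := by positivity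
  simp only [gaussianPDF]
  rw [ENNReal.toReal_ofReal (gaussianPDFReal_nonneg 0 1 x), gaussianPDFReal, rpow_one]
  push_cast
  rw [show (2*π*(1:ℝ)) = 2*π by ring, show -(x-0)^2/(2*(1:ℝ)) = -(1/2)*x^2 by ring,
    show (√(2*π))⁻¹ * (x * rexp (-(1/2)*x^2)) = x * ((√(2*π))⁻¹ * rexp (-(1/2)*x^2)) by ring,
    abs_mul, abs_of_nonneg hnn]

lemma integrable_dom {g : ℝ → ℝ} (hg : AEStronglyMeasurable g (gaussianReal 0 1)) (a b : ℝ)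
    (h : ∀ z, |g z| ≤ a + b * |z|) : Integrable g (gaussianReal 0 1) :=
  ((integrable_const a).add (integrable_abs_gauss.const_mul b)).mono' hg
    (ae_of_all _ fun z => by simpa [Real.norm_eq_abs] using h z)

noncomputable def sg (y : ℝ) : ℝ := rexp y / (1 + rexp y)

lemma sg_pos (y : ℝ) : 0 < sg y := div_pos (exp_pos y) (by positivity)

lemma sg_lt_one (y : ℝ) : sg y < 1 := by
  rw [sg, div_lt_one (by positivity)]; linarith [exp_pos y]

lemma abs_sg_le (y : ℝ) : |sg y| ≤ 1 :=
  abs_le.2 ⟨by linarith [sg_pos y], (sg_lt_one y).le⟩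

lemma exp_mul_sg_neg (y : ℝ) : rexp y * sg (-y) = sg y := by
  have h := exp_pos y
  simp only [sg, exp_neg]
  field_simp
  ring

lemma measurable_sg : Measurable sg := by
  unfold sg; fun_prop

lemma log_one_add_exp_nonneg (y : ℝ) : 0 ≤ Real.log (1 + rexp y) :=
  Real.log_nonneg (by linarith [exp_pos y])

lemma log_one_add_exp_le (y : ℝ) : Real.log (1 + rexp y) ≤ Real.log 2 + |y| := by
  have h1 : (1:ℝ) + rexp y ≤ 2 * rexp |y| := by
    have h2 := Real.one_le_exp (abs_nonneg y)
    have h3 := Real.exp_le_exp.mpr (le_abs_self y)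
    nlinarith
  calc Real.log (1 + rexp y) ≤ Real.log (2 * rexp |y|) :=
        Real.log_le_log (by positivity) h1
    _ = Real.log 2 + |y| := by
        rw [Real.log_mul (by norm_num) (exp_pos _).ne', Real.log_exp]

lemma hasDerivAt_inner (z τ : ℝ) :
    HasDerivAt (fun t : ℝ => Real.log (1 + rexp (-t*z - t^2/2))) ((-z - τ) * sg (-τ*z - τ^2/2)) τ := by
  have hu : HasDerivAt (fun t : ℝ => -t*z - t^2/2) (-z - τ) τ := by
    have h := (((hasDerivAt_id τ).neg.mul_const z)).sub ((hasDerivAt_pow 2 τ).div_const 2)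
    exact h.congr_deriv (by norm_num)
  have hlog : HasDerivAt (fun y : ℝ => Real.log (1 + rexp y)) (sg (-τ*z - τ^2/2)) (-τ*z - τ^2/2) := by
    have := ((Real.hasDerivAt_exp (-τ*z - τ^2/2)).const_add 1).log
      (by positivity : (1:ℝ) + rexp (-τ*z - τ^2/2) ≠ 0)
    simpa [sg] using this
  exact (hlog.comp τ hu).congr_deriv (mul_comm _ _)

lemma cont_sg : Continuous sg :=
  continuous_exp.div (by fun_prop) fun y => by positivity

lemma cont_logexp (τ : ℝ) : Continuous fun z : ℝ => Real.log (1 + rexp (-τ*z - τ^2/2)) :=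
  Continuous.log (by fun_prop) fun z => by positivity

lemma asm_F' (τ : ℝ) :
    AEStronglyMeasurable (fun z : ℝ => (-z - τ) * sg (-τ*z - τ^2/2)) (gaussianReal 0 1) :=
  ((by fun_prop : Continuous fun z : ℝ => -z - τ).mul (cont_sg.comp (by fun_prop))).aestronglyMeasurable


noncomputable def Kf (τ : ℝ) : ℝ :=
  ∫ z, Real.log (1 + rexp (-τ*z - τ^2/2)) ∂(gaussianReal 0 1)

lemma integrable_logexp (τ : ℝ) :
    Integrable (fun z => Real.log (1 + rexp (-τ*z - τ^2/2))) (gaussianReal 0 1) := by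
  refine integrable_dom (cont_logexp τ).aestronglyMeasurable (Real.log 2 + τ^2/2) |τ| fun z => ?_
  rw [abs_of_nonneg (log_one_add_exp_nonneg _)]
  calc Real.log (1 + rexp (-τ*z - τ^2/2)) ≤ Real.log 2 + |(-τ*z - τ^2/2)| :=
        log_one_add_exp_le _
    _ ≤ Real.log 2 + τ^2/2 + |τ| * |z| := by
        have h1 : |(-τ*z - τ^2/2)| ≤ |(-τ*z)| + |τ^2/2| := abs_sub _ _
        rw [abs_mul, abs_neg] at h1
        have h2 : |τ^2/2| = τ^2/2 := abs_of_nonneg (by positivity)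
        linarith

lemma hasDerivAt_Kf (τ₀ : ℝ) :
    HasDerivAt Kf (∫ z, (-z - τ₀) * sg (-τ₀*z - τ₀^2/2) ∂(gaussianReal 0 1)) τ₀ := by
  have h := hasDerivAt_integral_of_dominated_loc_of_deriv_le (μ := gaussianReal 0 1)
    (F := fun τ z => Real.log (1 + rexp (-τ*z - τ^2/2)))
    (F' := fun τ z => (-z - τ) * sg (-τ*z - τ^2/2))
    (bound := fun z => |z| + (|τ₀| + 1)) (x₀ := τ₀) (Metric.ball_mem_nhds τ₀ one_pos)
    (Filter.Eventually.of_forall fun τ => (cont_logexp τ).aestronglyMeasurable)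
    (integrable_logexp τ₀)
    (asm_F' τ₀)
    (ae_of_all _ fun z τ hτ => ?_)
    (integrable_abs_gauss.add (integrable_const _))
    (ae_of_all _ fun z τ hτ => hasDerivAt_inner z τ)
  · exact h.2
  · rw [Real.norm_eq_abs, abs_mul]
    have h1 : |(-z - τ)| ≤ |z| + |τ| := by
      have := abs_sub (-z) τ
      simpa using this
    have h2 : |τ| ≤ |τ₀| + 1 := by
      rw [Metric.mem_ball, Real.dist_eq] at hτ
      have := abs_sub_abs_le_abs_sub τ τ₀
      linarith
    have h3 := abs_sg_le (-τ*z - τ^2/2)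
    have h4 := abs_nonneg (-z - τ)
    nlinarith [abs_nonneg (sg (-τ*z - τ^2/2)), abs_nonneg z, abs_nonneg τ]

lemma integrable_F' (τ : ℝ) :
    Integrable (fun z : ℝ => (-z - τ) * sg (-τ*z - τ^2/2)) (gaussianReal 0 1) := by
  refine integrable_dom (asm_F' τ) |τ| 1 fun z => ?_
  rw [abs_mul]
  have h1 : |(-z - τ)| ≤ |z| + |τ| := by simpa using abs_sub (-z) τ
  have h3 := abs_sg_le (-τ*z - τ^2/2)
  nlinarith [abs_nonneg (-z - τ), abs_nonneg (sg (-τ*z - τ^2/2)), abs_nonneg z, abs_nonneg τ]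

lemma integrable_zsg (τ : ℝ) :
    Integrable (fun z : ℝ => z * sg (-τ*z - τ^2/2)) (gaussianReal 0 1) := by
  refine integrable_dom
    ((continuous_id.mul (cont_sg.comp (by fun_prop))).aestronglyMeasurable) 0 1 fun z => ?_
  rw [abs_mul]
  have h3 := abs_sg_le (-τ*z - τ^2/2)
  nlinarith [abs_nonneg z, abs_nonneg (sg (-τ*z - τ^2/2))]

lemma integrable_sg (τ : ℝ) :
    Integrable (fun z : ℝ => sg (-τ*z - τ^2/2)) (gaussianReal 0 1) := by
  refine integrable_dom ((cont_sg.comp (by fun_prop)).aestronglyMeasurable) 1 0 fun z => ?_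
  simpa using abs_sg_le (-τ*z - τ^2/2)

lemma Iτ_eq (τ : ℝ) :
    (∫ z, (-z - τ) * sg (-τ*z - τ^2/2) ∂(gaussianReal 0 1))
      = -(τ/2) * ∫ z, sg (-τ*z - τ^2/2) ∂(gaussianReal 0 1) := by
  set I := ∫ z, (-z - τ) * sg (-τ*z - τ^2/2) ∂(gaussianReal 0 1) with hI
  have hmeas : Measurable (fun z : ℝ => (-z - τ) * sg (-τ*z - τ^2/2)) :=
    (by fun_prop : Measurable fun z : ℝ => -z - τ).mul (measurable_sg.comp (by fun_prop))
  have h1 : I = ∫ z, z * sg (-τ*z - τ^2/2) ∂(gaussianReal 0 1) := by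
    rw [hI, chg τ hmeas]
    refine integral_congr_ae (ae_of_all _ fun z => ?_)
    dsimp only
    have e1 : -τ*(-z - τ) - τ^2/2 = -(-τ*z - τ^2/2) := by ring
    have e2 : -(-z - τ) - τ = z := by ring
    rw [e1, e2, show rexp (-τ*z - τ^2/2) * (z * sg (-(-τ*z - τ^2/2)))
      = z * (rexp (-τ*z - τ^2/2) * sg (-(-τ*z - τ^2/2))) by ring, exp_mul_sg_neg]
  have h2 : I + I = -τ * ∫ z, sg (-τ*z - τ^2/2) ∂(gaussianReal 0 1) := by
    nth_rewrite 2 [h1]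
    rw [hI, ← integral_add (integrable_F' τ) (integrable_zsg τ), ← MeasureTheory.integral_const_mul]
    refine integral_congr_ae (ae_of_all _ fun z => ?_)
    ring
  linarith

lemma S_pos (τ : ℝ) : 0 < ∫ z, sg (-τ*z - τ^2/2) ∂(gaussianReal 0 1) := by
  rw [integral_pos_iff_support_of_nonneg_ae (ae_of_all _ fun z => (sg_pos _).le)
    (integrable_sg τ)]
  rw [Set.eq_univ_of_forall (fun z => (sg_pos (-τ*z - τ^2/2)).ne') (α := ℝ)
    (s := Function.support fun z => sg (-τ*z - τ^2/2))]
  simp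

lemma Kf_strictAntiOn : StrictAntiOn Kf (Set.Ici 0) := by
  apply strictAntiOn_of_deriv_neg (convex_Ici 0)
  · exact Continuous.continuousOn
      (continuous_iff_continuousAt.2 fun τ => (hasDerivAt_Kf τ).differentiableAt.continuousAt)
  · intro τ hτ
    rw [interior_Ici (a := (0:ℝ))] at hτ
    rw [(hasDerivAt_Kf τ).deriv, Iτ_eq]
    have hS := S_pos τ
    have : (0:ℝ) < τ := hτ
    nlinarith

lemma integral_shift_scale (σ m : ℝ) {g : ℝ → ℝ} (hg : Measurable g) :
    ∫ s, g s ∂(gaussianReal m ⟨σ^2, sq_nonneg σ⟩) = ∫ z, g (σ * z + m) ∂(gaussianReal 0 1) := by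
  have hmap1 : (gaussianReal 0 ⟨σ^2, sq_nonneg σ⟩).map (· + m)
      = gaussianReal m ⟨σ^2, sq_nonneg σ⟩ := by
    have := gaussianReal_map_add_const (μ := 0) (v := ⟨σ^2, sq_nonneg σ⟩) m
    rw [zero_add] at this; exact this
  have hmap2 : (gaussianReal 0 1).map (σ * ·) = gaussianReal 0 ⟨σ^2, sq_nonneg σ⟩ := by
    rw [gaussianReal_map_const_mul]; norm_num; rfl
  rw [← hmap1, ← hmap2, Measure.map_map (by fun_prop) (by fun_prop),
    integral_map (by fun_prop) hg.aestronglyMeasurable]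
  rfl

lemma integral_comp_neg_gauss {g : ℝ → ℝ} (hg : Measurable g) :
    ∫ z, g (-z) ∂(gaussianReal 0 1) = ∫ z, g z ∂(gaussianReal 0 1) := by
  have hmap3 : (gaussianReal 0 1).map (fun z : ℝ => -z - 0) = gaussianReal 0 1 := by
    rw [map_reflect]; norm_num
  conv_rhs => rw [← hmap3]
  rw [integral_map (by fun_prop) hg.aestronglyMeasurable]
  simp only [sub_zero]

lemma Kf_flip (τ : ℝ) :
    ∫ z, Real.log (1 + rexp (τ*z - τ^2/2)) ∂(gaussianReal 0 1) = Kf τ := by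
  rw [Kf, ← integral_comp_neg_gauss (g := fun z => Real.log (1 + rexp (-τ*z - τ^2/2)))
    (Continuous.measurable (Continuous.log (by fun_prop) fun z => by positivity))]
  refine integral_congr_ae (ae_of_all _ fun z => ?_)
  dsimp only
  norm_num

lemma MLE_eq (σ : ℝ) (hσ : 0 < σ) (μ₀ μ₁ : ℝ) : MLE σ μ₀ μ₁ = Kf ((μ₁ - μ₀)/σ) := by
  have hσ' : σ ≠ 0 := hσ.ne'
  have cont1 : Continuous fun s : ℝ =>
      Real.log (1 + Real.exp (-(((μ₁ - μ₀) / σ ^ 2) * (s - (μ₀ + μ₁) / 2)))) :=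
    Continuous.log (by fun_prop) fun s => by positivity
  have cont2 : Continuous fun s : ℝ =>
      Real.log (1 + Real.exp (((μ₁ - μ₀) / σ ^ 2) * (s - (μ₀ + μ₁) / 2))) :=
    Continuous.log (by fun_prop) fun s => by positivity
  have h1 : (∫ s, Real.log (1 + Real.exp (-(((μ₁ - μ₀) / σ ^ 2) * (s - (μ₀ + μ₁) / 2))))
      ∂(gaussianReal μ₁ ⟨σ ^ 2, sq_nonneg σ⟩)) = Kf ((μ₁ - μ₀)/σ) := by
    rw [integral_shift_scale σ μ₁ cont1.measurable, Kf]
    refine integral_congr_ae (ae_of_all _ fun z => ?_)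
    dsimp only
    congr 2
    field_simp
    ring
  have h2 : (∫ s, Real.log (1 + Real.exp (((μ₁ - μ₀) / σ ^ 2) * (s - (μ₀ + μ₁) / 2)))
      ∂(gaussianReal μ₀ ⟨σ ^ 2, sq_nonneg σ⟩)) = Kf ((μ₁ - μ₀)/σ) := by
    rw [integral_shift_scale σ μ₀ cont2.measurable, ← Kf_flip ((μ₁ - μ₀)/σ)]
    refine integral_congr_ae (ae_of_all _ fun z => ?_)
    dsimp only
    congr 2
    field_simp
    ring
  rw [MLE, h1, h2]
  ring

/-- The balanced population MLE loss is strictly decreasing in the separation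
`Δ = μ₁ − μ₀` on `(0, 1)`. -/
theorem MLE_strictAnti_in_separation
    (σ : ℝ) (hσ : 0 < σ) (μ₀ μ₁ μ₀' μ₁' : ℝ)
    (h : μ₀ < μ₁) (h' : μ₀' < μ₁')
    (hlt : μ₁ - μ₀ < μ₁' - μ₀') (hub : μ₁' - μ₀' < 1) :
    MLE σ μ₀' μ₁' < MLE σ μ₀ μ₁ := by
  rw [MLE_eq σ hσ, MLE_eq σ hσ]
  have h1 : (0:ℝ) < (μ₁ - μ₀)/σ := div_pos (sub_pos.2 h) hσ
  have h2 : (μ₁ - μ₀)/σ < (μ₁' - μ₀')/σ := (div_lt_div_iff_of_pos_right hσ).mpr hlt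
  exact Kf_strictAntiOn (Set.mem_Ici.mpr h1.le) (Set.mem_Ici.mpr (le_trans h1.le h2.le)) h2
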